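/- If π ∈ M(μ,ν) and π' ∈ M(ν,ρ) are Lipschitz-Markov martingale couplings, then their Markovian composition π ∘ π' ∈ M(μ,ρ) (obtained by composing the disintegration kernels) is again a Lipschitz-Markov martingale coupling. -/

import Mathlib

open MeasureTheory ProbabilityTheory

/-- A disintegration kernel `κ` of a martingale coupling of `μ` with a second marginal
is Lipschitz-Markov iff for every `1`-Lipschitz `f` the map `x ↦ ∫ f dκ_x` agrees
`μ`-a.e. with a `1`-Lipschitz function. -/
def LMKernel (μ : Measure ℝ) (κ : Kernel ℝ ℝ) : Prop :=
  ∀ f : ℝ → ℝ, LipschitzWith 1 f →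
    ∃ g : ℝ → ℝ, LipschitzWith 1 g ∧ ∀ᵐ x ∂μ, ∫ y, f y ∂(κ x) = g x

lemma bind_eq_map_snd (m : Measure ℝ) [SFinite m] (η : Kernel ℝ ℝ) [IsSFiniteKernel η] :
    m.bind η = (m ⊗ₘ η).map Prod.snd := by
  ext s hs
  rw [Measure.map_apply measurable_snd hs, Measure.compProd_apply (measurable_snd hs),
    Measure.bind_apply hs (Kernel.measurable η).aemeasurable]
  rfl

lemma ae_bind_kernel {m : Measure ℝ} {η : Kernel ℝ ℝ} {p : ℝ → Prop}
    (h : ∀ᵐ y ∂(m.bind η), p y) : ∀ᵐ a ∂m, ∀ᵐ y ∂η a, p y := by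
  rw [ae_iff] at h
  obtain ⟨t, hsub, htm, ht0⟩ := exists_measurable_superset_of_null h
  have h0 : ∫⁻ a, η a t ∂m = 0 := by
    rw [← Measure.bind_apply htm (Kernel.measurable η).aemeasurable]; exact ht0
  have h2 := (lintegral_eq_zero_iff (Kernel.measurable_coe η htm)).mp h0
  filter_upwards [h2] with a ha
  rw [ae_iff]
  exact measure_mono_null hsub ha

lemma integrable_bind_ae {m : Measure ℝ} [SFinite m] {η : Kernel ℝ ℝ} [IsSFiniteKernel η]
    {f : ℝ → ℝ} (hf : Integrable f (m.bind η)) : ∀ᵐ a ∂m, Integrable f (η a) := by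
  rw [bind_eq_map_snd] at hf
  have h2 : Integrable (fun p : ℝ × ℝ => f p.2) (m ⊗ₘ η) :=
    (integrable_map_measure hf.1 measurable_snd.aemeasurable).mp hf
  exact ((Measure.integrable_compProd_iff h2.1).mp h2).1

lemma integral_bind' {m : Measure ℝ} [SFinite m] {η : Kernel ℝ ℝ} [IsSFiniteKernel η]
    {f : ℝ → ℝ} (hf : Integrable f (m.bind η)) :
    ∫ y, f y ∂(m.bind η) = ∫ a, ∫ y, f y ∂η a ∂m := by
  rw [bind_eq_map_snd] at hf ⊢
  rw [integral_map measurable_snd.aemeasurable hf.1]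
  exact Measure.integral_compProd ((integrable_map_measure hf.1 measurable_snd.aemeasurable).mp hf)

lemma lipschitz_integrable {f : ℝ → ℝ} (hf : LipschitzWith 1 f) {m : Measure ℝ}
    [IsProbabilityMeasure m] (hm : Integrable (fun x => |x|) m) : Integrable f m := by
  refine ((integrable_const (|f 0|)).add hm).mono' hf.continuous.aestronglyMeasurable ?_
  filter_upwards with x
  have h := hf.dist_le_mul x 0
  simp only [Real.dist_eq, NNReal.coe_one, one_mul, sub_zero] at h
  rw [Real.norm_eq_abs]
  calc |f x| = |f x - f 0 + f 0| := by ring_nf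
    _ ≤ |f x - f 0| + |f 0| := abs_add_le _ _
    _ ≤ |f 0| + |x| := by linarith

/-- if `π ∈ M(μ,ν)` and `π' ∈ M(ν,ρ)` are Lipschitz-Markov martingale
couplings (with kernels `κ`, `κ'`), then their Markovian composition (the kernel
`x ↦ ∫ κ'_y dκ_x(y)`, i.e. `κ' ∘ₖ κ`) is again a Lipschitz-Markov martingale coupling
of `μ` and `ρ`. -/
theorem composition_of_lipschitz_markov_kernels
    (μ ν ρ : Measure ℝ) [IsProbabilityMeasure μ] [IsProbabilityMeasure ν]
    [IsProbabilityMeasure ρ]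
    (hμ : Integrable (fun x => |x|) μ) (hν : Integrable (fun x => |x|) ν)
    (hρ : Integrable (fun x => |x|) ρ)
    (κ κ' : Kernel ℝ ℝ) [IsMarkovKernel κ] [IsMarkovKernel κ']
    (hκmarg : μ.bind (fun x => κ x) = ν) (hκ'marg : ν.bind (fun y => κ' y) = ρ)
    (hκbary : ∀ᵐ x ∂μ, ∫ y, y ∂(κ x) = x) (hκ'bary : ∀ᵐ y ∂ν, ∫ z, z ∂(κ' y) = y)
    (hκint : ∀ᵐ x ∂μ, Integrable (fun y => |y|) (κ x))
    (hκ'int : ∀ᵐ y ∂ν, Integrable (fun z => |z|) (κ' y))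
    (hκLM : LMKernel μ κ) (hκ'LM : LMKernel ν κ') :
    μ.bind (fun x => (κ' ∘ₖ κ) x) = ρ ∧
    (∀ᵐ x ∂μ, ∫ z, z ∂((κ' ∘ₖ κ) x) = x) ∧
    LMKernel μ (κ' ∘ₖ κ) := by
  have hcomp : (fun x => (κ' ∘ₖ κ) x) = fun x => (κ x).bind κ' :=
    funext fun x => Kernel.comp_apply κ' κ x
  have hmarg : μ.bind (fun x => (κ' ∘ₖ κ) x) = ρ := by
    rw [hcomp, ← Measure.bind_bind (Kernel.measurable κ).aemeasurable (Kernel.measurable κ').aemeasurable, hκmarg, hκ'marg]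
  -- a.e. integrability of identity w.r.t. composed kernel
  have hidρ : Integrable (fun z : ℝ => z) ρ := by
    rw [← integrable_norm_iff (f := fun z : ℝ => z) measurable_id.aestronglyMeasurable]
    simpa [Real.norm_eq_abs] using hρ
  have hid_int : ∀ᵐ x ∂μ, Integrable (fun z : ℝ => z) ((κ' ∘ₖ κ) x) := by
    rw [← hmarg] at hidρ
    exact integrable_bind_ae hidρ
  -- transfer of ν-a.e. statements
  have transfer : ∀ {p : ℝ → Prop}, (∀ᵐ y ∂ν, p y) → ∀ᵐ x ∂μ, ∀ᵐ y ∂κ x, p y := by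
    intro p hp
    rw [← hκmarg] at hp
    exact ae_bind_kernel hp
  -- barycenter
  have hbary : ∀ᵐ x ∂μ, ∫ z, z ∂((κ' ∘ₖ κ) x) = x := by
    filter_upwards [hid_int, transfer hκ'bary, hκbary] with x hint htr hb
    rw [Kernel.comp_apply] at hint ⊢
    rw [integral_bind' hint, integral_congr_ae htr, hb]
  refine ⟨hmarg, hbary, ?_⟩
  intro f hf
  obtain ⟨g', hg', hg'ae⟩ := hκ'LM f hf
  obtain ⟨g, hg, hgae⟩ := hκLM g' hg'
  refine ⟨g, hg, ?_⟩
  filter_upwards [hid_int, transfer hg'ae, hgae] with x hint htr hgx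
  have habs : Integrable (fun z : ℝ => |z|) ((κ' ∘ₖ κ) x) := by
    simpa [Real.norm_eq_abs] using hint.norm
  have hfi : Integrable f ((κ' ∘ₖ κ) x) := lipschitz_integrable hf habs
  rw [Kernel.comp_apply] at hfi ⊢
  rw [integral_bind' hfi, integral_congr_ae htr, hgx]
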